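/- Let 0 < r < 1 and let T = [[√r, 1−r],[0, √r]] be the 2×2 complex matrix. Then ‖T‖ = 1 (operator norm), σ(T) = {√r}, T is invertible, and ‖r·T⁻¹‖ ≤ 1; hence T ∈ C_{1,r}. -/

import Mathlib

open Matrix

lemma aux_bound (r b : ℝ) (hr0 : 0 < r) (hr1 : r < 1) (hb : |b| = 1 - r) :
    ‖Matrix.toEuclideanCLM (𝕜 := ℂ) !![((Real.sqrt r : ℝ) : ℂ), (b : ℂ); 0, ((Real.sqrt r : ℝ) : ℂ)]‖ ≤ 1 := by
  set a := Real.sqrt r with ha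
  have ha0 : 0 ≤ a := Real.sqrt_nonneg r
  have ha2 : a * a = r := Real.mul_self_sqrt hr0.le
  apply ContinuousLinearMap.opNorm_le_bound _ zero_le_one
  intro x
  rw [one_mul]
  set M : Matrix (Fin 2) (Fin 2) ℂ := !![((a : ℝ) : ℂ), (b : ℂ); 0, ((a : ℝ) : ℂ)]
  have hy0 : (Matrix.toEuclideanCLM (𝕜 := ℂ) M x) 0 = (a:ℂ) * x 0 + (b:ℂ) * x 1 := by
    have := Matrix.ofLp_toEuclideanCLM (𝕜 := ℂ) M x
    have h0 := congrFun this 0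
    simpa [M, Matrix.toLin'_apply, Matrix.mulVec, dotProduct, Fin.sum_univ_two] using h0
  have hy1 : (Matrix.toEuclideanCLM (𝕜 := ℂ) M x) 1 = (a:ℂ) * x 1 := by
    have := Matrix.ofLp_toEuclideanCLM (𝕜 := ℂ) M x
    have h1 := congrFun this 1
    simpa [M, Matrix.toLin'_apply, Matrix.mulVec, dotProduct, Fin.sum_univ_two] using h1
  rw [EuclideanSpace.norm_eq, EuclideanSpace.norm_eq, Fin.sum_univ_two, Fin.sum_univ_two,
    hy0, hy1]
  apply Real.sqrt_le_sqrt
  set u := ‖x 0‖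
  set v := ‖x 1‖
  have hu : 0 ≤ u := norm_nonneg _
  have hv : 0 ≤ v := norm_nonneg _
  have h1 : ‖(a:ℂ) * x 0 + (b:ℂ) * x 1‖ ≤ a * u + (1 - r) * v := by
    calc ‖(a:ℂ) * x 0 + (b:ℂ) * x 1‖ ≤ ‖(a:ℂ) * x 0‖ + ‖(b:ℂ) * x 1‖ := norm_add_le _ _
    _ = a * u + |b| * v := by
        simp [u, v, norm_mul, Complex.norm_real, abs_of_nonneg ha0, Real.norm_eq_abs]
    _ = a * u + (1 - r) * v := by rw [hb]
  have h2 : ‖(a:ℂ) * x 1‖ = a * v := by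
    simp [v, norm_mul, Complex.norm_real, abs_of_nonneg ha0, Real.norm_eq_abs]
  have key_eq : (a*u+(1-r)*v)^2 + (a*v)^2 + (1-r)*(u-a*v)^2 = u^2+v^2 := by
    linear_combination (u^2 + v^2 + (1-r)*v^2) * ha2
  have key : (a * u + (1 - r) * v) ^ 2 + (a * v) ^ 2 ≤ u ^ 2 + v ^ 2 := by
    nlinarith [key_eq, mul_nonneg (by linarith : (0:ℝ) ≤ 1 - r) (sq_nonneg (u - a*v))]
  have hn1 : ‖(a:ℂ) * x 0 + (b:ℂ) * x 1‖ ^ 2 ≤ (a * u + (1 - r) * v) ^ 2 :=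
    pow_le_pow_left₀ (norm_nonneg _) h1 2
  have h2' : ‖(a:ℂ) * x 1‖ ^ 2 = (a * v) ^ 2 := by rw [h2]
  linarith

/-- For `0 < r < 1`, the matrix `T = [[√r, 1-r],[0, √r]]` satisfies `‖T‖ = 1`
(operator norm on Euclidean space), `σ(T) = {√r}`, `T` is invertible, and
`‖r·T⁻¹‖ ≤ 1`; hence `T ∈ C_{1,r}`. -/
theorem stmt8 (r : ℝ) (hr0 : 0 < r) (hr1 : r < 1)
    (T : Matrix (Fin 2) (Fin 2) ℂ)
    (hT : T = !![((Real.sqrt r : ℝ) : ℂ), ((1 - r : ℝ) : ℂ);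
                 0, ((Real.sqrt r : ℝ) : ℂ)]) :
    ‖Matrix.toEuclideanCLM (𝕜 := ℂ) T‖ = 1
      ∧ spectrum ℂ T = {((Real.sqrt r : ℝ) : ℂ)}
      ∧ IsUnit T
      ∧ ‖Matrix.toEuclideanCLM (𝕜 := ℂ) ((r : ℂ) • T⁻¹)‖ ≤ 1 := by
  have ha0 : 0 ≤ Real.sqrt r := Real.sqrt_nonneg r
  have haa : ((Real.sqrt r : ℝ) : ℂ) * ((Real.sqrt r : ℝ) : ℂ) = (r : ℂ) := by
    rw [← Complex.ofReal_mul, Real.mul_self_sqrt hr0.le]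
  have hdet : T.det = (r : ℂ) := by
    rw [hT, Matrix.det_fin_two_of]
    simp [haa]
  have hr_ne : (r : ℂ) ≠ 0 := by
    exact_mod_cast (Complex.ofReal_ne_zero).mpr hr0.ne'
  have hdetu : IsUnit T.det := by rw [hdet]; exact isUnit_iff_ne_zero.mpr hr_ne
  have hunit : IsUnit T := (Matrix.isUnit_iff_isUnit_det T).mpr hdetu
  -- norm = 1
  have hle : ‖Matrix.toEuclideanCLM (𝕜 := ℂ) T‖ ≤ 1 := by
    rw [hT]
    have := aux_bound r (1 - r) hr0 hr1 (abs_of_nonneg (by linarith))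
    simpa using this
  have hge : 1 ≤ ‖Matrix.toEuclideanCLM (𝕜 := ℂ) T‖ := by
    set x : EuclideanSpace ℂ (Fin 2) :=
      (WithLp.equiv 2 (Fin 2 → ℂ)).symm ![((Real.sqrt r : ℝ) : ℂ), 1] with hx
    have hxy : Matrix.toEuclideanCLM (𝕜 := ℂ) T x =
        (WithLp.equiv 2 (Fin 2 → ℂ)).symm ![(1 : ℂ), ((Real.sqrt r : ℝ) : ℂ)] := by
      rw [hx, WithLp.equiv_symm_apply, Matrix.toEuclideanCLM_toLp]
      congr 1
      rw [hT]
      funext i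
      fin_cases i <;>
        simp [Matrix.toLin'_apply, Matrix.mulVec, dotProduct, Fin.sum_univ_two] <;>
        linear_combination haa
    have hnx : ‖x‖ = Real.sqrt (r + 1) := by
      rw [EuclideanSpace.norm_eq, Fin.sum_univ_two]
      congr 1
      simp [hx, Complex.norm_real, Real.norm_eq_abs, abs_of_nonneg ha0]
      rw [Real.sq_sqrt hr0.le]
    have hny : ‖Matrix.toEuclideanCLM (𝕜 := ℂ) T x‖ = Real.sqrt (r + 1) := by
      rw [hxy, EuclideanSpace.norm_eq, Fin.sum_univ_two]
      congr 1
      simp [Complex.norm_real, Real.norm_eq_abs, abs_of_nonneg ha0]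
      rw [Real.sq_sqrt hr0.le]; ring
    have hb := (Matrix.toEuclideanCLM (𝕜 := ℂ) T).le_opNorm x
    rw [hnx, hny] at hb
    have hpos : 0 < Real.sqrt (r + 1) := Real.sqrt_pos.mpr (by linarith)
    nlinarith [hb, hpos]
  refine ⟨le_antisymm hle hge, ?_, hunit, ?_⟩
  · -- spectrum
    ext z
    simp only [spectrum.mem_iff, Set.mem_singleton_iff]
    rw [Matrix.isUnit_iff_isUnit_det]
    have hdz : (algebraMap ℂ (Matrix (Fin 2) (Fin 2) ℂ) z - T).det
        = (z - ((Real.sqrt r : ℝ) : ℂ)) ^ 2 := by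
      rw [hT]
      have : algebraMap ℂ (Matrix (Fin 2) (Fin 2) ℂ) z
          - !![((Real.sqrt r : ℝ) : ℂ), ((1 - r : ℝ) : ℂ); 0, ((Real.sqrt r : ℝ) : ℂ)]
          = !![z - ((Real.sqrt r : ℝ) : ℂ), -((1 - r : ℝ) : ℂ); 0, z - ((Real.sqrt r : ℝ) : ℂ)] := by
        ext i j
        fin_cases i <;> fin_cases j <;>
          simp [Matrix.algebraMap_matrix_apply, Matrix.one_apply]
      rw [this, Matrix.det_fin_two_of]
      ring
    rw [hdz]
    rw [isUnit_iff_ne_zero, not_not, pow_eq_zero_iff two_ne_zero, sub_eq_zero]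
  · -- ‖r T⁻¹‖ ≤ 1
    set S : Matrix (Fin 2) (Fin 2) ℂ :=
      !![((Real.sqrt r : ℝ) : ℂ), ((-(1 - r) : ℝ) : ℂ); 0, ((Real.sqrt r : ℝ) : ℂ)] with hS
    have hTS : T * S = (r : ℂ) • (1 : Matrix (Fin 2) (Fin 2) ℂ) := by
      rw [hT]
      ext i j
      fin_cases i <;> fin_cases j <;>
        simp [hS, Matrix.mul_apply, Fin.sum_univ_two, Matrix.one_apply] <;>
        push_cast <;> first
        | linear_combination haa
        | linear_combination -haa
        | ring
    have hinv : (r : ℂ) • T⁻¹ = S := by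
      calc (r : ℂ) • T⁻¹ = T⁻¹ * ((r : ℂ) • 1) := by rw [Matrix.mul_smul, Matrix.mul_one]
      _ = T⁻¹ * (T * S) := by rw [hTS]
      _ = (T⁻¹ * T) * S := by rw [Matrix.mul_assoc]
      _ = S := by rw [Matrix.nonsing_inv_mul T hdetu, Matrix.one_mul]
    rw [hinv]
    exact aux_bound r (-(1 - r)) hr0 hr1 (by rw [abs_neg, abs_of_nonneg (by linarith)])
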